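/- For p = 1 and r ≥ 1, the diameter of OΓ_n^{(1,r)} equals n. -/

import Mathlib

/-- Hamming distance between two binary words (as lists). -/
def hdist (u v : List Bool) : ℕ := (List.zipWith bne u v).count true

/-- `w` is an I-Fibonacci (p,r)-code: no factor `1^(r+1)` and no factor `1 0^s 1` with `s < p`
(equivalently: maximal blocks of 1s have length ≤ r and blocks of 1s are separated by ≥ p zeros). -/
def ICode (p r : ℕ) (w : List Bool) : Prop :=
  ¬ (List.replicate (r + 1) true <:+: w) ∧
  ∀ s < p, ¬ ((true :: (List.replicate s false ++ [true])) <:+: w)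

/-- `w` is an O-Fibonacci (p,r)-code: no factor `(10^(p-1))^r 1` and no factor `1 0^s 1`
with `s ≤ p - 2`. -/
def OCode (p r : ℕ) (w : List Bool) : Prop :=
  ¬ (((List.replicate r (true :: List.replicate (p - 1) false)).flatten ++ [true]) <:+: w) ∧
  ∀ s, s + 2 ≤ p → ¬ ((true :: (List.replicate s false ++ [true])) <:+: w)

/-- Vertex type of the I-Fibonacci (p,r)-cube of dimension n. -/
def IVert (p r n : ℕ) := {w : List Bool // w.length = n ∧ ICode p r w}

/-- Vertex type of the O-Fibonacci (p,r)-cube of dimension n. -/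
def OVert (p r n : ℕ) := {w : List Bool // w.length = n ∧ OCode p r w}

/-- The I-Fibonacci (p,r)-cube: vertices adjacent iff they differ in exactly one coordinate. -/
def IGraph (p r n : ℕ) : SimpleGraph (IVert p r n) :=
  SimpleGraph.fromRel (fun u v => hdist u.1 v.1 = 1)

/-- The O-Fibonacci (p,r)-cube. -/
def OGraph (p r n : ℕ) : SimpleGraph (OVert p r n) :=
  SimpleGraph.fromRel (fun u v => hdist u.1 v.1 = 1)

/-- Eccentricity of a vertex. -/
noncomputable def ecc {V : Type*} (G : SimpleGraph V) (v : V) : ℕ :=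
  sSup {d | ∃ u, G.dist v u = d}

/-- Radius of a graph. -/
noncomputable def grad {V : Type*} (G : SimpleGraph V) : ℕ :=
  sInf {e | ∃ v, ecc G v = e}

/-- Diameter of a graph. -/
noncomputable def gdiam {V : Type*} (G : SimpleGraph V) : ℕ :=
  sSup {d | ∃ u v, G.dist u v = d}

/-- Degree of a vertex (number of neighbours). -/
noncomputable def deg {V : Type*} (G : SimpleGraph V) (v : V) : ℕ :=
  {u | G.Adj v u}.ncard


namespace OGdAux

/-! ### Basic facts about `hdist` -/

lemma hdist_nil (v : List Bool) : hdist [] v = 0 := by simp [hdist]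

lemma hdist_nil' (u : List Bool) : hdist u [] = 0 := by simp [hdist]

lemma hdist_cons (a b : Bool) (u v : List Bool) :
    hdist (a :: u) (b :: v) = hdist u v + if a = b then 0 else 1 := by
  cases a <;> cases b <;> simp [hdist, List.count_cons]

lemma hdist_self (u : List Bool) : hdist u u = 0 := by
  induction u with
  | nil => simp [hdist]
  | cons a u ih => simp [hdist_cons, ih]

lemma hdist_comm : ∀ (u v : List Bool), hdist u v = hdist v u := by
  intro u
  induction u with
  | nil => intro v; simp [hdist_nil, hdist_nil']
  | cons a u ih =>
    intro v
    cases v with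
    | nil => simp [hdist_nil, hdist_nil']
    | cons b v => cases a <;> cases b <;> simp [hdist_cons, ih]

lemma hdist_le_length (u v : List Bool) : hdist u v ≤ u.length := by
  calc hdist u v ≤ (List.zipWith bne u v).length := List.count_le_length
  _ ≤ u.length := by rw [List.length_zipWith]; omega

lemma eq_of_hdist_eq_zero : ∀ {u v : List Bool}, u.length = v.length → hdist u v = 0 → u = v := by
  intro u
  induction u with
  | nil => intro v hl _; cases v <;> simp_all
  | cons a u ih =>
    intro v hl h0
    cases v with
    | nil => simp at hl
    | cons b v =>
      rw [hdist_cons] at h0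
      have hab : a = b := by by_contra hab; simp [hab] at h0
      have : u = v := ih (by simpa using hl) (by omega)
      rw [hab, this]

lemma hdist_triangle : ∀ (u w v : List Bool), u.length = w.length → w.length = v.length →
    hdist u v ≤ hdist u w + hdist w v := by
  intro u
  induction u with
  | nil => intro w v _ _; simp [hdist_nil]
  | cons a u ih =>
    intro w v hw hv
    cases w with
    | nil => simp at hw
    | cons b w =>
      cases v with
      | nil => simp [hdist_nil']
      | cons c v =>
        have := ih w v (by simpa using hw) (by simpa using hv)
        cases a <;> cases b <;> cases c <;> simp [hdist_cons] <;> omega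

lemma exists_ne_getD : ∀ {u v : List Bool}, u.length = v.length → u ≠ v →
    ∃ i < u.length, u.getD i false ≠ v.getD i false := by
  intro u
  induction u with
  | nil => intro v hl hne; cases v <;> simp_all
  | cons a u ih =>
    intro v hl hne
    cases v with
    | nil => simp at hl
    | cons b v =>
      by_cases hab : a = b
      · subst hab
        have huv : u ≠ v := by intro h; exact hne (by rw [h])
        obtain ⟨i, hi, hd⟩ := ih (by simpa using hl) huv
        exact ⟨i + 1, by simpa using Nat.succ_lt_succ hi, by simpa using hd⟩
      · exact ⟨0, by simp, by simpa using hab⟩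

lemma hdist_set : ∀ (u v : List Bool) (i : ℕ), u.length = v.length →
    i < u.length → u.getD i false = false → v.getD i false = true →
    hdist (u.set i true) v + 1 = hdist u v := by
  intro u
  induction u with
  | nil => intro v i _ hi; simp at hi
  | cons a u ih =>
    intro v i hl hi hu0 hv1
    cases v with
    | nil => simp at hl
    | cons b v =>
      cases i with
      | zero =>
        simp only [List.getD_cons_zero] at hu0 hv1
        subst hu0; subst hv1
        simp [List.set_cons_zero, hdist_cons]
      | succ i =>
        simp only [List.getD_cons_succ] at hu0 hv1
        have := ih v i (by simpa using hl) (by simpa using hi) hu0 hv1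
        simp only [List.set_cons_succ, hdist_cons]
        omega

lemma getD_set_self : ∀ (u : List Bool) (i : ℕ), i < u.length →
    (u.set i true).getD i false = true := by
  intro u
  induction u with
  | nil => intro i hi; simp at hi
  | cons a u ih =>
    intro i hi
    cases i with
    | zero => simp
    | succ i => simpa using ih i (by simpa using hi)

lemma hdist_set_one (u : List Bool) (i : ℕ) (hi : i < u.length)
    (h0 : u.getD i false = false) : hdist u (u.set i true) = 1 := by
  have := hdist_set u (u.set i true) i (by simp) hi h0 (getD_set_self u i hi)
  have h2 := hdist_self (u.set i true)
  omega

lemma hdist_and_split : ∀ (u v : List Bool), u.length = v.length →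
    hdist u (List.zipWith and u v) + hdist (List.zipWith and u v) v = hdist u v := by
  intro u
  induction u with
  | nil => intro v _; simp [hdist_nil, hdist_nil']
  | cons a u ih =>
    intro v hl
    cases v with
    | nil => simp at hl
    | cons b v =>
      have := ih v (by simpa using hl)
      cases a <;> cases b <;> simp [hdist_cons] <;> omega

/-! ### Masks -/

/-- `u` is a pointwise submask of `v`. -/
def Mask (u v : List Bool) : Prop :=
  u.length = v.length ∧ ∀ i, u.getD i false = true → v.getD i false = true

lemma getD_zipWith_and : ∀ (u v : List Bool) (i : ℕ),
    (List.zipWith and u v).getD i false = ((u.getD i false) && (v.getD i false)) := by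
  intro u
  induction u with
  | nil => intro v i; simp
  | cons a u ih =>
    intro v i
    cases v with
    | nil => simp
    | cons b v =>
      cases i with
      | zero => simp
      | succ i => simp only [List.zipWith_cons_cons, List.getD_cons_succ]; exact ih v i

lemma mask_and_left (u v : List Bool) (hl : u.length = v.length) :
    Mask (List.zipWith and u v) u := by
  refine ⟨by rw [List.length_zipWith]; omega, fun i h => ?_⟩
  rw [getD_zipWith_and] at h
  simp only [Bool.and_eq_true] at h
  exact h.1

lemma mask_and_right (u v : List Bool) (hl : u.length = v.length) :
    Mask (List.zipWith and u v) v := by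
  refine ⟨by rw [List.length_zipWith]; omega, fun i h => ?_⟩
  rw [getD_zipWith_and] at h
  simp only [Bool.and_eq_true] at h
  exact h.2

lemma mask_set_true {u v : List Bool} (hm : Mask u v) {i : ℕ}
    (hv : v.getD i false = true) : Mask (u.set i true) v := by
  refine ⟨by rw [List.length_set]; exact hm.1, fun j hj => ?_⟩
  rcases eq_or_ne i j with rfl | hij
  · exact hv
  · apply hm.2 j
    rw [List.getD_eq_getElem?_getD, List.getElem?_set, if_neg hij,
      ← List.getD_eq_getElem?_getD] at hj
    exact hj

/-! ### Infixes of `replicate true`, and codes -/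

lemma replicate_infix_iff (m : ℕ) (w : List Bool) :
    List.replicate m true <:+: w ↔
      ∃ k, k + m ≤ w.length ∧ ∀ j < m, w.getD (k + j) false = true := by
  constructor
  · rintro ⟨s, t, rfl⟩
    refine ⟨s.length, by simp only [List.length_append, List.length_replicate]; omega,
      fun j hj => ?_⟩
    rw [List.append_assoc, List.getD_append_right _ _ _ _ (by omega)]
    have hjj : s.length + j - s.length = j := by omega
    rw [hjj, List.getD_append _ _ _ _ (by simpa using hj),
      List.getD_eq_getElem _ _ (by simpa using hj)]
    simp
  · rintro ⟨k, hk, hall⟩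
    refine ⟨w.take k, w.drop (k + m), ?_⟩
    have hmid : (w.drop k).take m = List.replicate m true := by
      rw [List.eq_replicate_iff]
      constructor
      · simp only [List.length_take, List.length_drop]; omega
      · intro b hb
        rw [List.mem_iff_getElem] at hb
        obtain ⟨j, hj, hbj⟩ := hb
        have hjm : j < m := by
          simp only [List.length_take, List.length_drop] at hj; omega
        rw [List.getElem_take, List.getElem_drop] at hbj
        rw [← hbj, ← List.getD_eq_getElem _ false (by omega)]
        exact hall j hjm
    rw [← hmid, List.append_assoc, ← List.drop_drop, List.take_append_drop,
      List.take_append_drop]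

lemma mask_infix {u v : List Bool} (hm : Mask u v) {m : ℕ}
    (h : List.replicate m true <:+: u) : List.replicate m true <:+: v := by
  rw [replicate_infix_iff] at h ⊢
  obtain ⟨k, hk, hall⟩ := h
  exact ⟨k, by rw [← hm.1]; exact hk, fun j hj => hm.2 _ (hall j hj)⟩

lemma flatten_replicate_singleton (r : ℕ) :
    (List.replicate r [true]).flatten = List.replicate r true := by
  induction r with
  | zero => simp
  | succ r ih => simp [List.replicate_succ, ih]

lemma OCode_one_iff (r : ℕ) (w : List Bool) :
    OCode 1 r w ↔ ¬ (List.replicate (r + 1) true <:+: w) := by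
  unfold OCode
  constructor
  · rintro ⟨h1, _⟩ h
    apply h1
    simpa [flatten_replicate_singleton, List.replicate_succ'] using h
  · intro h
    refine ⟨?_, fun s hs => by omega⟩
    intro h'
    apply h
    simpa [flatten_replicate_singleton, List.replicate_succ'] using h'

lemma mask_OCode {r : ℕ} {u v : List Bool} (hm : Mask u v) (hv : OCode 1 r v) :
    OCode 1 r u := by
  rw [OCode_one_iff] at hv ⊢
  exact fun h => hv (mask_infix hm h)

/-! ### Walks in `OGraph 1 r n` -/

lemma adj_of_hdist_one {r n : ℕ} (u v : OVert 1 r n) (h : hdist u.1 v.1 = 1) :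
    (OGraph 1 r n).Adj u v := by
  rw [OGraph, SimpleGraph.fromRel_adj]
  refine ⟨?_, Or.inl h⟩
  intro hesub
  rw [hesub, hdist_self] at h
  omega

lemma walk_mask (r n : ℕ) : ∀ (k : ℕ) (u v : List Bool)
    (hu : u.length = n ∧ OCode 1 r u) (hv : v.length = n ∧ OCode 1 r v),
    Mask u v → hdist u v = k →
    ∃ W : (OGraph 1 r n).Walk ⟨u, hu⟩ ⟨v, hv⟩, W.length = k := by
  intro k
  induction k with
  | zero =>
    intro u v hu hv _ h0
    have huv : u = v := eq_of_hdist_eq_zero (hu.1.trans hv.1.symm) h0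
    subst huv
    exact ⟨SimpleGraph.Walk.nil, rfl⟩
  | succ k ih =>
    intro u v hu hv hm hk
    have hne : u ≠ v := by
      intro h; subst h; rw [hdist_self] at hk; omega
    obtain ⟨i, hi, hdiff⟩ := exists_ne_getD (hu.1.trans hv.1.symm) hne
    have hui : u.getD i false = false := by
      by_contra hcon
      have h : u.getD i false = true := by
        revert hcon; cases u.getD i false <;> simp
      exact hdiff (h.trans (hm.2 i h).symm)
    have hvi : v.getD i false = true := by
      cases h : v.getD i false
      · rw [h, hui] at hdiff; exact absurd rfl hdiff
      · rfl
    have hmu' : Mask (u.set i true) v := mask_set_true hm hvi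
    have hu' : (u.set i true).length = n ∧ OCode 1 r (u.set i true) :=
      ⟨by rw [List.length_set]; exact hu.1, mask_OCode hmu' hv.2⟩
    have hstep : hdist (u.set i true) v = k := by
      have := hdist_set u v i (hu.1.trans hv.1.symm) hi hui hvi
      omega
    obtain ⟨W, hW⟩ := ih (u.set i true) v hu' hv hmu' hstep
    have hadj : (OGraph 1 r n).Adj ⟨u, hu⟩ ⟨u.set i true, hu'⟩ :=
      adj_of_hdist_one _ _ (hdist_set_one u i hi hui)
    exact ⟨SimpleGraph.Walk.cons hadj W,
      (SimpleGraph.Walk.length_cons hadj W).trans (congrArg (· + 1) hW)⟩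

lemma hdist_of_adj {r n : ℕ} {u v : OVert 1 r n} (h : (OGraph 1 r n).Adj u v) :
    hdist u.1 v.1 = 1 := by
  rw [OGraph, SimpleGraph.fromRel_adj] at h
  rcases h.2 with h1 | h1
  · exact h1
  · rw [hdist_comm]; exact h1

lemma hdist_le_walk_length {r n : ℕ} : ∀ {u v : OVert 1 r n}
    (p : (OGraph 1 r n).Walk u v), hdist u.1 v.1 ≤ p.length := by
  intro u v p
  induction p with
  | nil => simp [hdist_self]
  | @cons a b c hadj p ih =>
    have h1 := hdist_of_adj hadj
    have htri := hdist_triangle a.1 b.1 c.1 (a.2.1.trans b.2.1.symm) (b.2.1.trans c.2.1.symm)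
    simp only [SimpleGraph.Walk.length_cons]
    omega

lemma dist_eq_hdist {r n : ℕ} (u v : OVert 1 r n) :
    (OGraph 1 r n).dist u v = hdist u.1 v.1 := by
  have hl : u.1.length = v.1.length := u.2.1.trans v.2.1.symm
  set w : List Bool := List.zipWith and u.1 v.1 with hw
  have hml : Mask w u.1 := mask_and_left u.1 v.1 hl
  have hmr : Mask w v.1 := mask_and_right u.1 v.1 hl
  have hwp : w.length = n ∧ OCode 1 r w :=
    ⟨hml.1.trans u.2.1, mask_OCode hml u.2.2⟩
  obtain ⟨W1, hW1⟩ := walk_mask r n (hdist w u.1) w u.1 hwp u.2 hml rfl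
  obtain ⟨W2, hW2⟩ := walk_mask r n (hdist w v.1) w v.1 hwp v.2 hmr rfl
  have hW : ∃ W : (OGraph 1 r n).Walk u v, W.length = hdist u.1 v.1 := by
    refine ⟨W1.reverse.append W2, ?_⟩
    refine (SimpleGraph.Walk.length_append W1.reverse W2).trans ?_
    have h3 := SimpleGraph.Walk.length_reverse W1
    have hsplit := hdist_and_split u.1 v.1 hl
    rw [← hw] at hsplit
    have h4 := hdist_comm w u.1
    omega
  obtain ⟨W, hWlen⟩ := hW
  apply le_antisymm
  · rw [← hWlen]; exact SimpleGraph.dist_le W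
  · obtain ⟨p, hp⟩ := W.reachable.exists_walk_length_eq_dist
    rw [← hp]
    exact hdist_le_walk_length p

/-! ### The alternating word -/

def altW : Bool → ℕ → List Bool
  | _, 0 => []
  | b, n + 1 => b :: altW (!b) n

lemma altW_length : ∀ (n : ℕ) (b : Bool), (altW b n).length = n := by
  intro n
  induction n with
  | zero => intro b; rfl
  | succ n ih => intro b; simp [altW, ih]

lemma altW_hdist : ∀ (n : ℕ) (b : Bool), hdist (altW b n) (altW (!b) n) = n := by
  intro n
  induction n with
  | zero => intro b; simp [altW, hdist]
  | succ n ih =>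
    intro b
    have h := ih (!b)
    rw [Bool.not_not] at h
    have hb : (b = !b) = False := by cases b <;> simp
    simp [altW, hdist_cons, hb, h]

lemma not_true_prefix_altW_false : ∀ (m : ℕ), ¬ ([true] <+: altW false m) := by
  intro m
  cases m with
  | zero => simp [altW]
  | succ m => simp [altW, List.cons_prefix_cons]

lemma altW_no11 : ∀ (n : ℕ) (b : Bool), ¬ ([true, true] <:+: altW b n) := by
  intro n
  induction n with
  | zero => intro b; simp [altW]
  | succ n ih =>
    intro b h
    rw [show altW b (n + 1) = b :: altW (!b) n from rfl, List.infix_cons_iff] at h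
    rcases h with h | h
    · rw [List.cons_prefix_cons] at h
      obtain ⟨hb, h2⟩ := h
      rw [← hb] at h2
      exact not_true_prefix_altW_false n (by simpa using h2)
    · exact ih (!b) h

lemma altW_code (r n : ℕ) (hr : 1 ≤ r) (b : Bool) : OCode 1 r (altW b n) := by
  rw [OCode_one_iff]
  intro h
  apply altW_no11 n b
  have hpre : [true, true] <+: List.replicate (r + 1) true := by
    have h2 : List.replicate (r + 1) true = [true, true] ++ List.replicate (r - 1) true := by
      rw [show r + 1 = 2 + (r - 1) by omega, List.replicate_add]
      rfl
    rw [h2]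
    exact List.prefix_append _ _
  exact hpre.isInfix.trans h

end OGdAux

/-- `diam(OΓ_n^{(1,r)}) = n`. -/
theorem OGraph_diam_p_one (r n : ℕ) (hr : 1 ≤ r) (hn : 1 ≤ n) :
    gdiam (OGraph 1 r n) = n := by
  classical
  have hub : ∀ d ∈ {d | ∃ u v, (OGraph 1 r n).dist u v = d}, d ≤ n := by
    rintro d ⟨u, v, rfl⟩
    rw [OGdAux.dist_eq_hdist]
    calc hdist u.1 v.1 ≤ u.1.length := OGdAux.hdist_le_length _ _
    _ = n := u.2.1
  let ut : OVert 1 r n :=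
    ⟨OGdAux.altW true n, OGdAux.altW_length n true, OGdAux.altW_code r n hr true⟩
  let uf : OVert 1 r n :=
    ⟨OGdAux.altW false n, OGdAux.altW_length n false, OGdAux.altW_code r n hr false⟩
  have hmem : n ∈ {d | ∃ u v, (OGraph 1 r n).dist u v = d} := by
    refine ⟨ut, uf, ?_⟩
    rw [OGdAux.dist_eq_hdist]
    simpa using OGdAux.altW_hdist n true
  unfold gdiam
  apply le_antisymm
  · exact csSup_le ⟨n, hmem⟩ hub
  · exact le_csSup ⟨n, fun d hd => hub d hd⟩ hmem
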